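/- Let (X,T) be a minimal topological dynamical system and let d ≥ 1 be an integer. Then there exists a dense G_δ set X_0 ⊆ X such that for every x ∈ X_0 one has Q^{[d]}[x] = cl F^{[d]}(x^{[d]}), i.e. the set of points of Q^{[d]}(X) whose (0,…,0)-coordinate equals x coincides with the closure of the F^{[d]}-orbit of the diagonal point x^{[d]}. -/

import Mathlib

open Set

/-- The group of self-homeomorphisms of a topological space,
with `(f * g) x = f (g x)`. -/
instance homeomorphGroup {X : Type*} [TopologicalSpace X] : Group (X ≃ₜ X) where
  mul f g := g.trans f
  one := Homeomorph.refl X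
  inv := Homeomorph.symm
  mul_assoc f g h := rfl
  one_mul f := by ext x; rfl
  mul_one f := by ext x; rfl
  inv_mul_cancel f := by ext x; exact f.symm_apply_apply x

/-- `n · ε = n₁ε₁ + ⋯ + n_dε_d`. -/
def nDot {d : ℕ} (n : Fin d → ℤ) (ε : Fin d → Bool) : ℤ :=
  ∑ i, if ε i then n i else 0

/-- The vertex `(0,…,0)` of the cube `{0,1}^d`. -/
def v0 (d : ℕ) : Fin d → Bool := fun _ => false

/-- A topological dynamical system `(X,T)` is minimal if every orbit is dense. -/
def IsMinimalTDS {X : Type*} [TopologicalSpace X] (T : X ≃ₜ X) : Prop :=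
  ∀ x : X, Dense (Set.range fun n : ℤ => (T ^ n) x)

/-- The dynamical parallelepiped `Q^{[d]}(X)`: the closure in `X^{[d]} = X^({0,1}^d)`
of the set of points `(T^{n·ε} x)_{ε ∈ {0,1}^d}`, `x ∈ X`, `n ∈ ℤ^d`. -/
def cubeQ {X : Type*} [TopologicalSpace X] (T : X ≃ₜ X) (d : ℕ) :
    Set ((Fin d → Bool) → X) :=
  closure {y | ∃ (x : X) (n : Fin d → ℤ), y = fun ε => (T ^ nDot n ε) x}

/-- The regionally proximal relation of order `k` (for `k = 0` this is all of `X × X`). -/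
def RP {X : Type*} [MetricSpace X] (T : X ≃ₜ X) (k : ℕ) : Set (X × X) :=
  {p | ∀ δ > 0, ∃ (x' y' : X) (n : Fin k → ℤ),
    dist p.1 x' < δ ∧ dist p.2 y' < δ ∧
    ∀ ε : Fin k → Bool, ε ≠ v0 k →
      dist ((T ^ nDot n ε) x') ((T ^ nDot n ε) y') < δ}

/-- A factor map between topological dynamical systems: a continuous surjection
intertwining the actions. -/
def IsFactorMap {X Z : Type*} [TopologicalSpace X] [TopologicalSpace Z]
    (T : X ≃ₜ X) (S : Z ≃ₜ Z) (π : X → Z) : Prop :=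
  Continuous π ∧ Function.Surjective π ∧ ∀ x, π (T x) = S (π x)

/-- The diagonal homeomorphism `T^{[d]} = T × ⋯ × T` of `X^{[d]}`. -/
def diagHomeo {X : Type*} [TopologicalSpace X] (T : X ≃ₜ X) (d : ℕ) :
    ((Fin d → Bool) → X) ≃ₜ ((Fin d → Bool) → X) :=
  Homeomorph.piCongrRight fun _ : Fin d → Bool => T

/-- `w` is a minimal point of the homeomorphism `S`. -/
def IsMinimalPoint {W : Type*} [TopologicalSpace W] (S : W ≃ₜ W) (w : W) : Prop :=
  ∀ y ∈ closure (Set.range fun n : ℤ => (S ^ n) w),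
    closure (Set.range fun n : ℤ => (S ^ n) y)
      = closure (Set.range fun n : ℤ => (S ^ n) w)

/-- The `j`-th face transformation `T_j^{[d]}` of `X^{[d]}`. -/
def faceHomeo {X : Type*} [TopologicalSpace X] {d : ℕ} (T : X ≃ₜ X) (j : Fin d) :
    ((Fin d → Bool) → X) ≃ₜ ((Fin d → Bool) → X) :=
  Homeomorph.piCongrRight fun ε : Fin d → Bool =>
    if ε j then T else Homeomorph.refl X

/-- The face group `F^{[d]}`: the group of homeomorphisms of `X^{[d]}`
generated by the face transformations. -/
def faceGroup {X : Type*} [TopologicalSpace X] (T : X ≃ₜ X) (d : ℕ) :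
    Subgroup (((Fin d → Bool) → X) ≃ₜ ((Fin d → Bool) → X)) :=
  Subgroup.closure (Set.range (faceHomeo (d := d) T))

/-- The orbit of a point under a group of homeomorphisms. -/
def groupOrbit {W : Type*} [TopologicalSpace W] (G : Subgroup (W ≃ₜ W)) (w : W) : Set W :=
  {y | ∃ g ∈ G, g w = y}

/-- The homeomorphism `id × T_*^{[d]}` of `X^{[d]}`, fixing the `(0,…,0)`-coordinate
and applying `T` to every other coordinate. -/
def idFaceHomeo {X : Type*} [TopologicalSpace X] (T : X ≃ₜ X) (d : ℕ) :
    ((Fin d → Bool) → X) ≃ₜ ((Fin d → Bool) → X) :=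
  Homeomorph.piCongrRight fun ε : Fin d → Bool =>
    if ε = v0 d then Homeomorph.refl X else T

set_option linter.unusedSectionVars false

section basic
variable {X : Type*} [TopologicalSpace X] (T : X ≃ₜ X) {d : ℕ}

lemma hm_mul_apply (f g : X ≃ₜ X) (x : X) : (f * g) x = f (g x) := rfl
lemma hm_one_apply (x : X) : (1 : X ≃ₜ X) x = x := rfl
lemma hm_zpow_add_apply (a b : ℤ) (x : X) : (T ^ (a + b)) x = (T ^ a) ((T ^ b) x) := by
  rw [zpow_add]; rfl
lemma hm_zpow_zero_apply (x : X) : (T ^ (0 : ℤ)) x = x := by rw [zpow_zero]; rfl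

lemma nDot_v0 (n : Fin d → ℤ) : nDot n (v0 d) = 0 := by simp [nDot, v0]
lemma nDot_zero (ε : Fin d → Bool) : nDot (0 : Fin d → ℤ) ε = 0 := by simp [nDot]
lemma nDot_add (n m : Fin d → ℤ) (ε : Fin d → Bool) :
    nDot (n + m) ε = nDot n ε + nDot m ε := by
  simp only [nDot, Pi.add_apply, ← Finset.sum_add_distrib]
  exact Finset.sum_congr rfl fun i _ => by split <;> simp
lemma nDot_neg (n : Fin d → ℤ) (ε : Fin d → Bool) : nDot (-n) ε = -nDot n ε := by
  simp only [nDot, Pi.neg_apply, ← Finset.sum_neg_distrib]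
  exact Finset.sum_congr rfl fun i _ => by split <;> simp
lemma nDot_update (n : Fin d → ℤ) (a : Fin d) (ε : Fin d → Bool) :
    nDot n ε = nDot (Function.update n a 0) ε + (if ε a then n a else 0) := by
  simp only [nDot]
  rw [← Finset.sum_erase_add _ _ (Finset.mem_univ a), ← Finset.sum_erase_add _ (fun i => if ε i then Function.update n a 0 i else 0) (Finset.mem_univ a)]
  have h1 : ∀ i ∈ Finset.univ.erase a, (if ε i then Function.update n a 0 i else 0) = (if ε i then n i else 0) := by
    intro i hi
    rw [Function.update_of_ne (Finset.mem_erase.1 hi).1]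
  rw [Finset.sum_congr rfl h1]
  simp [Function.update_self]
end basic

section act
variable {X : Type*} [TopologicalSpace X] (T : X ≃ₜ X) {d : ℕ}

lemma faceHomeo_apply (j : Fin d) (w : (Fin d → Bool) → X) (ε : Fin d → Bool) :
    faceHomeo T j w ε = if ε j then T (w ε) else w ε := by
  rw [faceHomeo, Homeomorph.piCongrRight_apply]
  split <;> simp_all

lemma faceHomeo_inv_apply (j : Fin d) (w : (Fin d → Bool) → X) (ε : Fin d → Bool) :
    (faceHomeo T j)⁻¹ w ε = if ε j then T.symm (w ε) else w ε := by
  show (faceHomeo T j).symm w ε = _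
  rw [faceHomeo, Homeomorph.piCongrRight_symm, Homeomorph.piCongrRight_apply]
  split <;> simp_all

lemma faceHomeo_zpow_apply (j : Fin d) (k : ℤ) (w : (Fin d → Bool) → X) (ε : Fin d → Bool) :
    (faceHomeo T j ^ k) w ε = (T ^ (if ε j then k else 0)) (w ε) := by
  induction k using Int.induction_on generalizing w with
  | zero => rw [ite_self, zpow_zero, zpow_zero]; rfl
  | succ k ih =>
      have h1 : faceHomeo T j ^ ((k : ℤ) + 1) = faceHomeo T j ^ (k : ℤ) * faceHomeo T j :=
        zpow_add_one _ _
      rw [h1, hm_mul_apply, ih, faceHomeo_apply]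
      by_cases h : ε j
      · rw [if_pos h, if_pos h, if_pos h, hm_zpow_add_apply T k 1, zpow_one]
      · rw [if_neg h, if_neg h, if_neg h]
  | pred k ih =>
      have h1 : faceHomeo T j ^ (-(k : ℤ) - 1) = faceHomeo T j ^ (-(k : ℤ)) * (faceHomeo T j)⁻¹ := by
        rw [← zpow_neg_one, ← zpow_add]; ring_nf
      rw [h1, hm_mul_apply, ih, faceHomeo_inv_apply]
      by_cases h : ε j
      · rw [if_pos h, if_pos h, if_pos h,
          show (-(k : ℤ) - 1) = (-(k:ℤ)) + (-1) from by ring, hm_zpow_add_apply T (-k) (-1),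
          zpow_neg_one]
        rfl
      · rw [if_neg h, if_neg h, if_neg h]

/-- Lemma A: every element of the face group acts coordinatewise by `T ^ (n·ε)`. -/
lemma faceGroup_action {g : ((Fin d → Bool) → X) ≃ₜ ((Fin d → Bool) → X)}
    (hg : g ∈ faceGroup T d) :
    ∃ n : Fin d → ℤ, ∀ (w : (Fin d → Bool) → X) (ε : Fin d → Bool),
      g w ε = (T ^ nDot n ε) (w ε) := by
  induction hg using Subgroup.closure_induction with
  | mem x hx =>
      obtain ⟨j, rfl⟩ := hx
      refine ⟨fun i => if i = j then 1 else 0, fun w ε => ?_⟩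
      have hn : nDot (fun i => if i = j then (1:ℤ) else 0) ε = if ε j then 1 else 0 := by
        rw [nDot]
        rw [show (fun i => if ε i then (if i = j then (1:ℤ) else 0) else 0) = fun i => if i = j then (if ε i then (1:ℤ) else 0) else 0 from by funext i; by_cases h : i = j <;> by_cases h2 : ε i <;> simp [h, h2]]
        simp
      rw [hn, faceHomeo_apply]
      by_cases h : ε j
      · rw [if_pos h, if_pos h, zpow_one]
      · rw [if_neg h, if_neg h, hm_zpow_zero_apply]
  | one => exact ⟨0, fun w ε => by rw [nDot_zero, hm_zpow_zero_apply]; rfl⟩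
  | mul x y hx hy ihx ihy =>
      obtain ⟨n, hn⟩ := ihx
      obtain ⟨m, hm⟩ := ihy
      exact ⟨n + m, fun w ε => by rw [hm_mul_apply, hn, hm, nDot_add, hm_zpow_add_apply]⟩
  | inv x hx ih =>
      obtain ⟨n, hn⟩ := ih
      refine ⟨-n, fun w ε => ?_⟩
      have hthis := hn (x⁻¹ w) ε
      have hxx : x (x⁻¹ w) = w := x.apply_symm_apply w
      rw [hxx] at hthis
      rw [nDot_neg, zpow_neg]
      show x⁻¹ w ε = (T ^ nDot n ε).symm (w ε)
      rw [hthis]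
      exact ((T ^ nDot n ε).symm_apply_apply _).symm
end act

section act2
variable {X : Type*} [TopologicalSpace X] (T : X ≃ₜ X) {d : ℕ}

/-- Lemma B: every `n` is realized by some element of the face group. -/
lemma exists_faceGroup_of_n (n : Fin d → ℤ) :
    ∃ g ∈ faceGroup T d, ∀ (w : (Fin d → Bool) → X) (ε : Fin d → Bool),
      g w ε = (T ^ nDot n ε) (w ε) := by
  suffices H : ∀ (s : Finset (Fin d)) (n : Fin d → ℤ), (∀ j ∉ s, n j = 0) →
      ∃ g ∈ faceGroup T d, ∀ (w : (Fin d → Bool) → X) (ε : Fin d → Bool),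
        g w ε = (T ^ nDot n ε) (w ε) by
    exact H Finset.univ n (fun j hj => absurd (Finset.mem_univ j) hj)
  intro s
  induction s using Finset.induction_on with
  | empty =>
      intro n hn
      refine ⟨1, one_mem _, fun w ε => ?_⟩
      have : n = 0 := funext fun j => hn j (Finset.notMem_empty j)
      rw [this, nDot_zero, hm_zpow_zero_apply]
      rfl
  | @insert a s ha ih =>
      intro n hn
      obtain ⟨g', hg', hact'⟩ := ih (Function.update n a 0) (fun j hj => by
        by_cases hja : j = a
        · rw [hja, Function.update_self]
        · rw [Function.update_of_ne hja]
          exact hn j (by simp [Finset.mem_insert, hja, hj]))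
      have hfa : faceHomeo T a ∈ faceGroup T d :=
        Subgroup.subset_closure ⟨a, rfl⟩
      refine ⟨g' * (faceHomeo T a ^ (n a)), mul_mem hg' (zpow_mem hfa (n a)),
        fun w ε => ?_⟩
      rw [hm_mul_apply, hact', faceHomeo_zpow_apply, nDot_update n a ε,
        hm_zpow_add_apply]

end act2

section metric
variable {X : Type*} [MetricSpace X] [CompactSpace X] (T : X ≃ₜ X) (d : ℕ)

/-- the closed face-orbit of the diagonal point. -/
def Fs (x : X) : Set ((Fin d → Bool) → X) :=
  closure (groupOrbit (faceGroup T d) (fun _ => x))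

lemma const_mem_orbit (x : X) :
    (fun _ => x : (Fin d → Bool) → X) ∈ groupOrbit (faceGroup T d) (fun _ => x) :=
  ⟨1, one_mem _, rfl⟩

lemma Fs_nonempty (x : X) : (Fs T d x).Nonempty :=
  ⟨_, subset_closure (const_mem_orbit T d x)⟩

lemma Fs_closed (x : X) : IsClosed (Fs T d x) := isClosed_closure

/-- inner (lower) semicontinuity of `Fs`, uniform over the compact set `Fs x`. -/
lemma innerLsc (x : X) {γ : ℝ} (hγ : 0 < γ) :
    ∀ᶠ y in nhds x, ∀ v ∈ Fs T d x, ∃ v' ∈ Fs T d y, dist v v' < γ := by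
  classical
  have hK : IsCompact (Fs T d x) := (Fs_closed T d x).isCompact
  have hcover : Fs T d x ⊆ ⋃ g : (faceGroup T d), Metric.ball (g.1 (fun _ => x)) (γ/2) := by
    intro v hv
    rcases Metric.mem_closure_iff.1 hv (γ/2) (by linarith) with ⟨p, hp, hdp⟩
    rcases hp with ⟨g, hg, rfl⟩
    exact Set.mem_iUnion.2 ⟨⟨g, hg⟩, by simpa [dist_comm] using hdp⟩
  obtain ⟨t, ht⟩ := hK.elim_finite_subcover _ (fun _ => Metric.isOpen_ball) hcover
  have hev : ∀ᶠ y in nhds x, ∀ g ∈ t,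
      dist (g.1 (fun _ => y)) (g.1 (fun _ => x)) < γ/2 := by
    rw [Finset.eventually_all]
    intro g _
    have hc : Continuous fun y : X => g.1 (fun _ => y) :=
      g.1.continuous.comp (continuous_pi fun _ => continuous_id)
    exact Metric.tendsto_nhds.1 (hc.tendsto x) (γ/2) (by linarith)
  filter_upwards [hev] with y hy v hv
  rcases Set.mem_iUnion₂.1 (ht hv) with ⟨g, hgt, hvg⟩
  refine ⟨g.1 (fun _ => y), subset_closure ⟨g.1, g.2, rfl⟩, ?_⟩
  have h1 : dist v (g.1 (fun _ => x)) < γ/2 := Metric.mem_ball.1 hvg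
  have h2 : dist (g.1 (fun _ => x)) (g.1 (fun _ => y)) < γ/2 := by
    rw [dist_comm]; exact hy g hgt
  calc dist v (g.1 (fun _ => y))
      ≤ dist v (g.1 (fun _ => x)) + dist (g.1 (fun _ => x)) (g.1 (fun _ => y)) :=
        dist_triangle _ _ _
    _ < γ/2 + γ/2 := add_lt_add h1 h2
    _ = γ := by ring

/-- upper semicontinuity of `x ↦ infDist u (Fs x)`. -/
lemma usc_infDist (u : (Fin d → Bool) → X) (x : X) {γ : ℝ} (hγ : 0 < γ) :
    ∀ᶠ y in nhds x, Metric.infDist u (Fs T d y) < Metric.infDist u (Fs T d x) + γ := by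
  obtain ⟨v, hv, hdv⟩ := (Metric.infDist_lt_iff (Fs_nonempty T d x)).1
    (lt_add_of_pos_right _ (by linarith : (0:ℝ) < γ/2) :
      Metric.infDist u (Fs T d x) < Metric.infDist u (Fs T d x) + γ/2)
  filter_upwards [innerLsc T d x (by linarith : (0:ℝ) < γ/2)] with y hy
  obtain ⟨v', hv', hdvv'⟩ := hy v hv
  calc Metric.infDist u (Fs T d y) ≤ dist u v' := Metric.infDist_le_dist_of_mem hv'
    _ ≤ dist u v + dist v v' := dist_triangle _ _ _
    _ < Metric.infDist u (Fs T d x) + γ/2 + γ/2 := by linarith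
    _ = Metric.infDist u (Fs T d x) + γ := by ring

lemma isOpen_sublevel (u : (Fin d → Bool) → X) (c : ℝ) :
    IsOpen {y : X | Metric.infDist u (Fs T d y) < c} := by
  rw [isOpen_iff_mem_nhds]
  intro y hy
  have hy' : Metric.infDist u (Fs T d y) < c := hy
  have hγ : 0 < c - Metric.infDist u (Fs T d y) := sub_pos.2 hy'
  filter_upwards [usc_infDist T d u y hγ] with z hz
  show Metric.infDist u (Fs T d z) < c
  linarith

end metric

section baire
variable {X : Type*} [MetricSpace X] [CompactSpace X] (T : X ≃ₜ X) (d : ℕ)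

/-- small-oscillation set for `x ↦ infDist u (Fs x)`. -/
def Gset (u : (Fin d → Bool) → X) (e : ℝ) : Set X :=
  {x | ∃ U : Set X, IsOpen U ∧ x ∈ U ∧ ∀ a ∈ U, ∀ b ∈ U,
    |Metric.infDist u (Fs T d a) - Metric.infDist u (Fs T d b)| ≤ e}

lemma isOpen_Gset (u : (Fin d → Bool) → X) (e : ℝ) : IsOpen (Gset T d u e) := by
  rw [isOpen_iff_mem_nhds]
  rintro x ⟨U, hUo, hxU, hosc⟩
  filter_upwards [hUo.mem_nhds hxU] with y hy
  exact ⟨U, hUo, hy, hosc⟩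

lemma dense_Gset (u : (Fin d → Bool) → X) {e : ℝ} (he : 0 < e) :
    Dense (Gset T d u e) := by
  rw [dense_iff_inter_open]
  rintro U hUo ⟨x₀, hx₀⟩
  set f : X → ℝ := fun x => Metric.infDist u (Fs T d x) with hf
  have hbdd : BddBelow (f '' U) := ⟨0, by rintro _ ⟨a, _, rfl⟩; exact Metric.infDist_nonneg⟩
  set c : ℝ := sInf (f '' U) with hc
  obtain ⟨_, ⟨x₁, hx₁U, rfl⟩, hx₁lt⟩ :=
    Real.lt_sInf_add_pos (Set.Nonempty.image f ⟨x₀, hx₀⟩) (by linarith : (0:ℝ) < e/2)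
  set V : Set X := U ∩ {y | f y < c + e/2} with hV
  have hVo : IsOpen V := hUo.inter (isOpen_sublevel T d u (c + e/2))
  have hx₁V : x₁ ∈ V := ⟨hx₁U, hx₁lt⟩
  refine ⟨x₁, hx₁U, V, hVo, hx₁V, fun a ha b hb => ?_⟩
  have hca : c ≤ f a := csInf_le hbdd ⟨a, ha.1, rfl⟩
  have hcb : c ≤ f b := csInf_le hbdd ⟨b, hb.1, rfl⟩
  have hfa : f a < c + e/2 := ha.2
  have hfb : f b < c + e/2 := hb.2
  rw [abs_sub_le_iff]
  constructor <;> linarith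

/-- at points of all the `Gset`s, `Fs` is upper semicontinuous. -/
lemma usc_at_good (u : ℕ → (Fin d → Bool) → X) (hu : DenseRange u) (x₀ : X)
    (hx₀ : ∀ m k : ℕ, x₀ ∈ Gset T d (u m) (1/(k+1)))
    {η : ℝ} (hη : 0 < η) :
    ∀ᶠ y in nhds x₀, ∀ w ∈ Fs T d y, Metric.infDist w (Fs T d x₀) ≤ η := by
  obtain ⟨k, hk⟩ := exists_nat_one_div_lt (by linarith : (0:ℝ) < η/4)
  have hcover : (Set.univ : Set ((Fin d → Bool) → X)) ⊆
      ⋃ m : ℕ, Metric.ball (u m) (η/4) := by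
    intro w _
    rcases Metric.mem_closure_iff.1 (hu w) (η/4) (by linarith) with ⟨p, ⟨m, rfl⟩, hp⟩
    exact Set.mem_iUnion.2 ⟨m, by simpa [dist_comm] using hp⟩
  obtain ⟨s, hs⟩ := isCompact_univ.elim_finite_subcover _
    (fun _ => Metric.isOpen_ball) hcover
  have hev : ∀ᶠ y in nhds x₀, ∀ m ∈ s,
      |Metric.infDist (u m) (Fs T d y) - Metric.infDist (u m) (Fs T d x₀)| ≤ 1/(k+1) := by
    rw [Finset.eventually_all]
    intro m _
    obtain ⟨U, hUo, hxU, hosc⟩ := hx₀ m k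
    filter_upwards [hUo.mem_nhds hxU] with y hy
    exact hosc y hy x₀ hxU
  filter_upwards [hev] with y hy w hw
  rcases Set.mem_iUnion₂.1 (hs (Set.mem_univ w)) with ⟨m, hms, hwm⟩
  have hdw : dist w (u m) < η/4 := Metric.mem_ball.1 hwm
  have h1 : Metric.infDist (u m) (Fs T d y) ≤ dist (u m) w :=
    Metric.infDist_le_dist_of_mem hw
  have h2 : dist (u m) w < η/4 := by rw [dist_comm]; exact hdw
  have h3 := hy m hms
  have h4 : Metric.infDist (u m) (Fs T d x₀) < η/4 + 1/(k+1) := by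
    have := abs_sub_le_iff.1 h3
    linarith [this.2]
  calc Metric.infDist w (Fs T d x₀)
      ≤ Metric.infDist (u m) (Fs T d x₀) + dist w (u m) :=
        Metric.infDist_le_infDist_add_dist
    _ ≤ η := by linarith

end baire

/-- for a minimal system there is a dense `G_δ` set `X₀ ⊆ X` such that for
every `x ∈ X₀`, `Q^{[d]}[x]` coincides with the closure of the `F^{[d]}`-orbit of the
diagonal point `x^{[d]}`. -/
theorem statement11 {X : Type*} [MetricSpace X] [CompactSpace X]
    (T : X ≃ₜ X) (hmin : IsMinimalTDS T)
    (d : ℕ) (hd : 1 ≤ d) :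
    ∃ X₀ : Set X, Dense X₀ ∧ IsGδ X₀ ∧ ∀ x ∈ X₀,
      {z ∈ cubeQ T d | z (v0 d) = x}
        = closure (groupOrbit (faceGroup T d) (fun _ => x)) := by
  classical
  rcases isEmpty_or_nonempty X with hX | hX
  · exact ⟨Set.univ, dense_univ, IsGδ.univ, fun x _ => (IsEmpty.false x).elim⟩
  obtain ⟨u, hu⟩ := TopologicalSpace.exists_dense_seq ((Fin d → Bool) → X)
  have hopen : ∀ p : ℕ × ℕ, IsOpen (Gset T d (u p.1) (1/(p.2+1))) :=
    fun p => isOpen_Gset T d (u p.1) (1/(p.2+1))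
  have hdense : ∀ p : ℕ × ℕ, Dense (Gset T d (u p.1) (1/(p.2+1))) :=
    fun p => dense_Gset T d (u p.1) (by positivity)
  refine ⟨⋂ p : ℕ × ℕ, Gset T d (u p.1) (1/(p.2+1)),
    dense_iInter_of_isOpen hopen hdense,
    IsGδ.iInter (fun p => (hopen p).isGδ), fun x hx => ?_⟩
  apply Set.Subset.antisymm
  · -- hard inclusion: Q^{[d]}[x] ⊆ closed face-orbit of the diagonal
    rintro z ⟨hzQ, hzv0⟩
    have hmem : z ∈ closure (Fs T d x) := by
      rw [Metric.mem_closure_iff]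
      intro ε hε
      have hx₀G : ∀ m k : ℕ, x ∈ Gset T d (u m) (1/(k+1)) := fun m k =>
        Set.mem_iInter.1 hx (m, k)
      have husc := usc_at_good T d u hu x hx₀G (by linarith : (0:ℝ) < ε/4)
      rcases Metric.eventually_nhds_iff.1 husc with ⟨δ, hδ, hball⟩
      have hpos : 0 < min δ (ε/4) := lt_min hδ (by linarith)
      rcases Metric.mem_closure_iff.1 hzQ (min δ (ε/4)) hpos with ⟨w, hwpre, hdzw⟩
      obtain ⟨y, n, rfl⟩ := hwpre
      set w : (Fin d → Bool) → X := fun ε' => (T ^ nDot n ε') y with hw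
      have hwv0 : w (v0 d) = y := by
        show (T ^ nDot n (v0 d)) y = y
        rw [nDot_v0, hm_zpow_zero_apply]
      have hdyx : dist y x < δ := by
        have h1 : dist (z (v0 d)) (w (v0 d)) ≤ dist z w := dist_le_pi_dist z w (v0 d)
        rw [hwv0, hzv0] at h1
        calc dist y x = dist x y := dist_comm _ _
          _ ≤ dist z w := h1
          _ < min δ (ε/4) := hdzw
          _ ≤ δ := min_le_left _ _
      have hworb : w ∈ Fs T d y := by
        obtain ⟨g, hg, hact⟩ := exists_faceGroup_of_n T n
        exact subset_closure ⟨g, hg, funext fun ε' => hact (fun _ => y) ε'⟩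
      have hinf : Metric.infDist w (Fs T d x) ≤ ε/4 := hball hdyx w hworb
      obtain ⟨p, hp, hdp⟩ := (Metric.infDist_lt_iff (Fs_nonempty T d x)).1
        (lt_of_le_of_lt hinf (by linarith : ε/4 < ε/2))
      refine ⟨p, hp, ?_⟩
      calc dist z p ≤ dist z w + dist w p := dist_triangle _ _ _
        _ < min δ (ε/4) + ε/2 := add_lt_add hdzw hdp
        _ ≤ ε/4 + ε/2 := by
            have := min_le_right δ (ε/4); linarith
        _ < ε := by linarith
    rw [(Fs_closed T d x).closure_eq] at hmem
    exact hmem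
  · -- easy inclusion
    have h1 : closure (groupOrbit (faceGroup T d) (fun _ => x)) ⊆ cubeQ T d := by
      apply closure_minimal ?_ isClosed_closure
      rintro _ ⟨g, hg, rfl⟩
      obtain ⟨n, hact⟩ := faceGroup_action T hg
      exact subset_closure ⟨x, n, funext fun ε' => hact (fun _ => x) ε'⟩
    have h2 : closure (groupOrbit (faceGroup T d) (fun _ => x)) ⊆
        {w : (Fin d → Bool) → X | w (v0 d) = x} := by
      apply closure_minimal ?_ (isClosed_eq (continuous_apply (v0 d)) continuous_const)
      rintro _ ⟨g, hg, rfl⟩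
      obtain ⟨n, hact⟩ := faceGroup_action T hg
      show g (fun _ => x) (v0 d) = x
      rw [hact (fun _ => x) (v0 d), nDot_v0, hm_zpow_zero_apply]
    exact fun z hz => ⟨h1 hz, h2 hz⟩
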